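/- arXiv:1808.08805 — 6 statements merged into one kernel-verified Lean document; each statement's English description precedes it below -/
import Mathlib

section
/- For each positive integer k and every real number s, the approximating function satisfies the sign condition s·f_k(s) ≥ 0. -/
open MeasureTheory intervalIntegral Real

theorem stmt_0
    (f : ℝ → ℝ) (hf : Continuous f) (hsign : ∀ s : ℝ, s * f s ≥ 0)
    (G : ℝ → ℝ) (hG : ∀ s : ℝ, G s = ∫ t in (0:ℝ)..s, f t)
    (fk : ℕ → ℝ → ℝ)
    (h1 : ∀ (k : ℕ), 0 < k → ∀ s : ℝ, s ≤ -(k:ℝ) →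
      fk k s = -(k:ℝ) * (G (-(k:ℝ) - 1/(k:ℝ)) - G (-(k:ℝ))))
    (h2 : ∀ (k : ℕ), 0 < k → ∀ s : ℝ, -(k:ℝ) ≤ s → s ≤ -(1/(k:ℝ)) →
      fk k s = -(k:ℝ) * (G (s - 1/(k:ℝ)) - G s))
    (h3 : ∀ (k : ℕ), 0 < k → ∀ s : ℝ, -(1/(k:ℝ)) ≤ s → s ≤ 0 →
      fk k s = (k:ℝ)^2 * s * (G (-(2/(k:ℝ))) - G (-(1/(k:ℝ)))))
    (h4 : ∀ (k : ℕ), 0 < k → ∀ s : ℝ, 0 ≤ s → s ≤ 1/(k:ℝ) →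
      fk k s = (k:ℝ)^2 * s * (G (2/(k:ℝ)) - G (1/(k:ℝ))))
    (h5 : ∀ (k : ℕ), 0 < k → ∀ s : ℝ, 1/(k:ℝ) ≤ s → s ≤ (k:ℝ) →
      fk k s = (k:ℝ) * (G (s + 1/(k:ℝ)) - G s))
    (h6 : ∀ (k : ℕ), 0 < k → ∀ s : ℝ, (k:ℝ) ≤ s →
      fk k s = (k:ℝ) * (G ((k:ℝ) + 1/(k:ℝ)) - G (k:ℝ))) :
    ∀ (k : ℕ), 0 < k → ∀ s : ℝ, s * fk k s ≥ 0 := by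

  intro k hk s
  have hk0 : (0:ℝ) < (k:ℝ) := by exact_mod_cast hk
  have hik : (0:ℝ) < 1/(k:ℝ) := by positivity
  have hfpos : ∀ t : ℝ, 0 ≤ t → 0 ≤ f t := by
    intro t ht
    rcases eq_or_lt_of_le ht with h | h
    · have : Filter.Tendsto f (nhdsWithin 0 (Set.Ioi 0)) (nhds (f 0)) :=
        (hf.continuousAt.continuousWithinAt).tendsto
      have : 0 ≤ f 0 := by
        refine ge_of_tendsto this ?_
        filter_upwards [self_mem_nhdsWithin] with x hx
        have := hsign x
        nlinarith [hx.out]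
      simpa [← h] using this
    · have := hsign t
      nlinarith
  have hfneg : ∀ t : ℝ, t ≤ 0 → f t ≤ 0 := by
    intro t ht
    rcases lt_or_eq_of_le ht with h | h
    · have := hsign t; nlinarith
    · have : Filter.Tendsto f (nhdsWithin 0 (Set.Iio 0)) (nhds (f 0)) :=
        (hf.continuousAt.continuousWithinAt).tendsto
      have h0 : f 0 ≤ 0 := by
        refine le_of_tendsto this ?_
        filter_upwards [self_mem_nhdsWithin] with x hx
        have := hsign x
        nlinarith [hx.out]
      simpa [h] using h0
  have hGd : ∀ a b : ℝ, G b - G a = ∫ t in a..b, f t := by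
    intro a b
    rw [hG, hG, integral_interval_sub_left
      (hf.intervalIntegrable 0 b) (hf.intervalIntegrable 0 a)]
  have hGpos : ∀ a b : ℝ, 0 ≤ a → a ≤ b → 0 ≤ G b - G a := by
    intro a b ha hab
    rw [hGd]
    exact integral_nonneg hab (fun u hu => hfpos u (ha.trans hu.1))
  have hGneg : ∀ a b : ℝ, a ≤ b → b ≤ 0 → G b - G a ≤ 0 := by
    intro a b hab hb
    rw [hGd]
    have h0 : 0 ≤ ∫ t in a..b, -f t :=
      integral_nonneg hab (fun u hu => by simpa using hfneg u (hu.2.trans hb))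
    rw [intervalIntegral.integral_neg] at h0
    linarith
  rcases le_total s (-(k:ℝ)) with hs1 | hs1
  · rw [h1 k hk s hs1]
    have h := hGneg (-(k:ℝ) - 1/(k:ℝ)) (-(k:ℝ)) (by linarith) (by linarith)
    have hp : 0 ≤ (k:ℝ) * ((-s) * (G (-(k:ℝ) - 1/(k:ℝ)) - G (-(k:ℝ)))) :=
      mul_nonneg hk0.le (mul_nonneg (by linarith) (by linarith))
    nlinarith [hp]
  · rcases le_total s (-(1/(k:ℝ))) with hs2 | hs2
    · rw [h2 k hk s hs1 hs2]
      have h := hGneg (s - 1/(k:ℝ)) s (by linarith) (by linarith)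
      have hp : 0 ≤ (k:ℝ) * ((-s) * (G (s - 1/(k:ℝ)) - G s)) :=
        mul_nonneg hk0.le (mul_nonneg (by linarith) (by linarith))
      nlinarith [hp]
    · rcases le_total s 0 with hs3 | hs3
      · rw [h3 k hk s hs2 hs3]
        have h := hGneg (-(2/(k:ℝ))) (-(1/(k:ℝ))) (by rw [neg_le_neg_iff]; rw [div_le_div_iff₀ hk0 hk0]; nlinarith) (by linarith)
        have hp : 0 ≤ ((k:ℝ)^2 * (s * s)) * (G (-(2/(k:ℝ))) - G (-(1/(k:ℝ)))) :=
          mul_nonneg (mul_nonneg (sq_nonneg _) (mul_self_nonneg s)) (by linarith)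
        nlinarith [hp]
      · rcases le_total s (1/(k:ℝ)) with hs4 | hs4
        · rw [h4 k hk s hs3 hs4]
          have h := hGpos (1/(k:ℝ)) (2/(k:ℝ)) (by linarith) (by rw [div_le_div_iff₀ hk0 hk0]; nlinarith)
          have hp : 0 ≤ ((k:ℝ)^2 * (s * s)) * (G (2/(k:ℝ)) - G (1/(k:ℝ))) :=
            mul_nonneg (mul_nonneg (sq_nonneg _) (mul_self_nonneg s)) h
          nlinarith [hp]
        · rcases le_total s (k:ℝ) with hs5 | hs5
          · rw [h5 k hk s hs4 hs5]
            have h := hGpos s (s + 1/(k:ℝ)) (by linarith) (by linarith)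
            have hp : 0 ≤ (s * (k:ℝ)) * (G (s + 1/(k:ℝ)) - G s) :=
              mul_nonneg (mul_nonneg hs3 hk0.le) h
            nlinarith [hp]
          · rw [h6 k hk s hs5]
            have h := hGpos (k:ℝ) ((k:ℝ) + 1/(k:ℝ)) (by linarith) (by linarith)
            have hp : 0 ≤ (s * (k:ℝ)) * (G ((k:ℝ) + 1/(k:ℝ)) - G (k:ℝ)) :=
              mul_nonneg (mul_nonneg (by linarith) hk0.le) h
            nlinarith [hp]
end

section
/- For each positive integer k, the approximating function f_k is Lipschitz: there exists a constant c_k > 0 such that |f_k(ξ) − f_k(η)| ≤ c_k·|ξ − η| for all ξ, η ∈ ℝ. -/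
open MeasureTheory intervalIntegral Real

lemma glue_aux (g : ℝ → ℝ) (c b : ℝ) (p : ℝ → Prop) (hb : p b)
    (hl : ∀ ξ, p ξ → ξ ≤ b → ∀ η, p η → η ≤ b → |g ξ - g η| ≤ c * |ξ - η|)
    (hr : ∀ ξ, p ξ → b ≤ ξ → ∀ η, p η → b ≤ η → |g ξ - g η| ≤ c * |ξ - η|) :
    ∀ ξ, p ξ → ∀ η, p η → |g ξ - g η| ≤ c * |ξ - η| := by
  have key : ∀ ξ, p ξ → ∀ η, p η → ξ ≤ η → |g ξ - g η| ≤ c * |ξ - η| := by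
    intro ξ hξ η hη hle
    rcases le_total η b with h | h
    · exact hl ξ hξ (hle.trans h) η hη h
    rcases le_total b ξ with h' | h'
    · exact hr ξ hξ h' η hη (h'.trans hle)
    · calc |g ξ - g η| ≤ |g ξ - g b| + |g b - g η| := by
            have e : g ξ - g η = (g ξ - g b) + (g b - g η) := by ring
            rw [e]; exact abs_add_le _ _
        _ ≤ c * |ξ - b| + c * |b - η| :=
            add_le_add (hl ξ hξ h' b hb le_rfl) (hr b hb le_rfl η hη h)
        _ = c * |ξ - η| := by
            rw [abs_of_nonpos (by linarith : ξ - b ≤ 0),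
              abs_of_nonpos (by linarith : b - η ≤ 0),
              abs_of_nonpos (by linarith : ξ - η ≤ 0)]
            ring
  intro ξ hξ η hη
  rcases le_total ξ η with h | h
  · exact key ξ hξ η hη h
  · rw [abs_sub_comm]; rw [abs_sub_comm ξ η]; exact key η hη ξ hξ h

theorem stmt_1
    (f : ℝ → ℝ) (hf : Continuous f) (hsign : ∀ s : ℝ, s * f s ≥ 0)
    (G : ℝ → ℝ) (hG : ∀ s : ℝ, G s = ∫ t in (0:ℝ)..s, f t)
    (fk : ℕ → ℝ → ℝ)
    (h1 : ∀ (k : ℕ), 0 < k → ∀ s : ℝ, s ≤ -(k:ℝ) →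
      fk k s = -(k:ℝ) * (G (-(k:ℝ) - 1/(k:ℝ)) - G (-(k:ℝ))))
    (h2 : ∀ (k : ℕ), 0 < k → ∀ s : ℝ, -(k:ℝ) ≤ s → s ≤ -(1/(k:ℝ)) →
      fk k s = -(k:ℝ) * (G (s - 1/(k:ℝ)) - G s))
    (h3 : ∀ (k : ℕ), 0 < k → ∀ s : ℝ, -(1/(k:ℝ)) ≤ s → s ≤ 0 →
      fk k s = (k:ℝ)^2 * s * (G (-(2/(k:ℝ))) - G (-(1/(k:ℝ)))))
    (h4 : ∀ (k : ℕ), 0 < k → ∀ s : ℝ, 0 ≤ s → s ≤ 1/(k:ℝ) →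
      fk k s = (k:ℝ)^2 * s * (G (2/(k:ℝ)) - G (1/(k:ℝ))))
    (h5 : ∀ (k : ℕ), 0 < k → ∀ s : ℝ, 1/(k:ℝ) ≤ s → s ≤ (k:ℝ) →
      fk k s = (k:ℝ) * (G (s + 1/(k:ℝ)) - G s))
    (h6 : ∀ (k : ℕ), 0 < k → ∀ s : ℝ, (k:ℝ) ≤ s →
      fk k s = (k:ℝ) * (G ((k:ℝ) + 1/(k:ℝ)) - G (k:ℝ)))
    :
    ∀ (k : ℕ), 0 < k → ∃ c : ℝ, 0 < c ∧
      ∀ ξ η : ℝ, |fk k ξ - fk k η| ≤ c * |ξ - η| := by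
  intro k hk
  have hk0 : (0:ℝ) < (k:ℝ) := by exact_mod_cast hk
  have hk1 : (1:ℝ) ≤ (k:ℝ) := by exact_mod_cast hk
  have hki0 : (0:ℝ) < 1/(k:ℝ) := by positivity
  have hkk : 1/(k:ℝ) ≤ (k:ℝ) := by
    calc 1/(k:ℝ) ≤ 1 := by rw [div_le_one hk0]; exact hk1
      _ ≤ (k:ℝ) := hk1
  set L : ℝ := (k:ℝ) + 1/(k:ℝ) with hL
  clear_value L
  have hL0 : (0:ℝ) < L := by rw [hL]; positivity
  obtain ⟨M, hM⟩ := (isCompact_Icc (a := -L) (b := L)).exists_bound_of_continuousOn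
    hf.continuousOn
  have hMb : ∀ x ∈ Set.Icc (-L) L, |f x| ≤ M := by
    intro x hx
    simpa [Real.norm_eq_abs] using hM x hx
  have hM0 : 0 ≤ M :=
    le_trans (abs_nonneg _) (hMb 0 ⟨by linarith, by linarith⟩)
  have GLip : ∀ x ∈ Set.Icc (-L) L, ∀ y ∈ Set.Icc (-L) L,
      |G x - G y| ≤ M * |x - y| := by
    intro x hx y hy
    have hxy : G x - G y = ∫ t in y..x, f t := by
      rw [hG x, hG y]
      exact intervalIntegral.integral_interval_sub_left
        (hf.intervalIntegrable 0 x) (hf.intervalIntegrable 0 y)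
    rw [hxy]
    have hbound : ∀ t ∈ Set.uIoc y x, ‖f t‖ ≤ M := by
      intro t ht
      rw [Real.norm_eq_abs]
      refine hMb t ⟨?_, ?_⟩
      · exact le_trans (le_inf hy.1 hx.1) ht.1.le
      · exact le_trans ht.2 (sup_le hy.2 hx.2)
    have := intervalIntegral.norm_integral_le_of_norm_le_const hbound
    rw [Real.norm_eq_abs] at this
    exact this
  set A : ℝ := G (-(2/(k:ℝ))) - G (-(1/(k:ℝ))) with hA
  set B : ℝ := G (2/(k:ℝ)) - G (1/(k:ℝ)) with hB
  set c : ℝ := 2*(k:ℝ)*M + (k:ℝ)^2 * |A| + (k:ℝ)^2 * |B| + 1 with hc'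
  clear_value A B c
  have habsA : (0:ℝ) ≤ (k:ℝ)^2 * |A| := by positivity
  have habsB : (0:ℝ) ≤ (k:ℝ)^2 * |B| := by positivity
  have hkM : (0:ℝ) ≤ 2*(k:ℝ)*M := by positivity
  have hc : 0 < c := by rw [hc']; linarith
  -- piece 1 : constant on (-∞, -k]
  have lip1 : ∀ ξ, ξ ≤ -(k:ℝ) → ∀ η, η ≤ -(k:ℝ) →
      |fk k ξ - fk k η| ≤ c * |ξ - η| := by
    intro ξ hξ η hη
    rw [h1 k hk ξ hξ, h1 k hk η hη, sub_self, abs_zero]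
    exact mul_nonneg hc.le (abs_nonneg _)
  -- piece 6 : constant on [k, ∞)
  have lip6 : ∀ ξ, (k:ℝ) ≤ ξ → ∀ η, (k:ℝ) ≤ η →
      |fk k ξ - fk k η| ≤ c * |ξ - η| := by
    intro ξ hξ η hη
    rw [h6 k hk ξ hξ, h6 k hk η hη, sub_self, abs_zero]
    exact mul_nonneg hc.le (abs_nonneg _)
  -- piece 2
  have lip2 : ∀ ξ, -(k:ℝ) ≤ ξ → ξ ≤ -(1/(k:ℝ)) → ∀ η, -(k:ℝ) ≤ η → η ≤ -(1/(k:ℝ)) →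
      |fk k ξ - fk k η| ≤ c * |ξ - η| := by
    intro ξ hξ1 hξ2 η hη1 hη2
    have e : fk k ξ - fk k η
        = (k:ℝ) * ((G ξ - G η) - (G (ξ - 1/(k:ℝ)) - G (η - 1/(k:ℝ)))) := by
      rw [h2 k hk ξ hξ1 hξ2, h2 k hk η hη1 hη2]; ring
    have m1 : ξ ∈ Set.Icc (-L) L := ⟨by linarith, by linarith⟩
    have m2 : η ∈ Set.Icc (-L) L := ⟨by linarith, by linarith⟩
    have m3 : ξ - 1/(k:ℝ) ∈ Set.Icc (-L) L := ⟨by linarith, by linarith⟩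
    have m4 : η - 1/(k:ℝ) ∈ Set.Icc (-L) L := ⟨by linarith, by linarith⟩
    have g1 := GLip ξ m1 η m2
    have g2 := GLip (ξ - 1/(k:ℝ)) m3 (η - 1/(k:ℝ)) m4
    rw [show ξ - 1/(k:ℝ) - (η - 1/(k:ℝ)) = ξ - η by ring] at g2
    calc |fk k ξ - fk k η|
        = |(k:ℝ)| * |(G ξ - G η) - (G (ξ - 1/(k:ℝ)) - G (η - 1/(k:ℝ)))| := by
          rw [e, abs_mul]
      _ ≤ (k:ℝ) * (|G ξ - G η| + |G (ξ - 1/(k:ℝ)) - G (η - 1/(k:ℝ))|) := by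
          rw [abs_of_pos hk0]
          exact mul_le_mul_of_nonneg_left (abs_sub _ _) hk0.le
      _ ≤ (k:ℝ) * (M * |ξ - η| + M * |ξ - η|) :=
          mul_le_mul_of_nonneg_left (add_le_add g1 g2) hk0.le
      _ = (2*(k:ℝ)*M) * |ξ - η| := by ring
      _ ≤ c * |ξ - η| := by
          apply mul_le_mul_of_nonneg_right _ (abs_nonneg _)
          rw [hc']; linarith
  -- piece 5
  have lip5 : ∀ ξ, 1/(k:ℝ) ≤ ξ → ξ ≤ (k:ℝ) → ∀ η, 1/(k:ℝ) ≤ η → η ≤ (k:ℝ) →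
      |fk k ξ - fk k η| ≤ c * |ξ - η| := by
    intro ξ hξ1 hξ2 η hη1 hη2
    have e : fk k ξ - fk k η
        = (k:ℝ) * ((G (ξ + 1/(k:ℝ)) - G (η + 1/(k:ℝ))) - (G ξ - G η)) := by
      rw [h5 k hk ξ hξ1 hξ2, h5 k hk η hη1 hη2]; ring
    have m1 : ξ ∈ Set.Icc (-L) L := ⟨by linarith, by linarith⟩
    have m2 : η ∈ Set.Icc (-L) L := ⟨by linarith, by linarith⟩
    have m3 : ξ + 1/(k:ℝ) ∈ Set.Icc (-L) L := ⟨by linarith, by linarith⟩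
    have m4 : η + 1/(k:ℝ) ∈ Set.Icc (-L) L := ⟨by linarith, by linarith⟩
    have g1 := GLip ξ m1 η m2
    have g2 := GLip (ξ + 1/(k:ℝ)) m3 (η + 1/(k:ℝ)) m4
    rw [show ξ + 1/(k:ℝ) - (η + 1/(k:ℝ)) = ξ - η by ring] at g2
    calc |fk k ξ - fk k η|
        = |(k:ℝ)| * |(G (ξ + 1/(k:ℝ)) - G (η + 1/(k:ℝ))) - (G ξ - G η)| := by
          rw [e, abs_mul]
      _ ≤ (k:ℝ) * (|G (ξ + 1/(k:ℝ)) - G (η + 1/(k:ℝ))| + |G ξ - G η|) := by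
          rw [abs_of_pos hk0]
          exact mul_le_mul_of_nonneg_left (abs_sub _ _) hk0.le
      _ ≤ (k:ℝ) * (M * |ξ - η| + M * |ξ - η|) :=
          mul_le_mul_of_nonneg_left (add_le_add g2 g1) hk0.le
      _ = (2*(k:ℝ)*M) * |ξ - η| := by ring
      _ ≤ c * |ξ - η| := by
          apply mul_le_mul_of_nonneg_right _ (abs_nonneg _)
          rw [hc']; linarith
  -- piece 3
  have lip3 : ∀ ξ, -(1/(k:ℝ)) ≤ ξ → ξ ≤ 0 → ∀ η, -(1/(k:ℝ)) ≤ η → η ≤ 0 →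
      |fk k ξ - fk k η| ≤ c * |ξ - η| := by
    intro ξ hξ1 hξ2 η hη1 hη2
    have e : fk k ξ - fk k η = (k:ℝ)^2 * (ξ - η) * A := by
      rw [h3 k hk ξ hξ1 hξ2, h3 k hk η hη1 hη2, hA]; ring
    rw [e, abs_mul, abs_mul, abs_of_nonneg (sq_nonneg (k:ℝ))]
    calc (k:ℝ)^2 * |ξ - η| * |A| = ((k:ℝ)^2 * |A|) * |ξ - η| := by ring
      _ ≤ c * |ξ - η| := by
          apply mul_le_mul_of_nonneg_right _ (abs_nonneg _)
          rw [hc']; linarith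
  -- piece 4
  have lip4 : ∀ ξ, 0 ≤ ξ → ξ ≤ 1/(k:ℝ) → ∀ η, 0 ≤ η → η ≤ 1/(k:ℝ) →
      |fk k ξ - fk k η| ≤ c * |ξ - η| := by
    intro ξ hξ1 hξ2 η hη1 hη2
    have e : fk k ξ - fk k η = (k:ℝ)^2 * (ξ - η) * B := by
      rw [h4 k hk ξ hξ1 hξ2, h4 k hk η hη1 hη2, hB]; ring
    rw [e, abs_mul, abs_mul, abs_of_nonneg (sq_nonneg (k:ℝ))]
    calc (k:ℝ)^2 * |ξ - η| * |B| = ((k:ℝ)^2 * |B|) * |ξ - η| := by ring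
      _ ≤ c * |ξ - η| := by
          apply mul_le_mul_of_nonneg_right _ (abs_nonneg _)
          rw [hc']; linarith
  -- glue everything
  have L1 : ∀ ξ, ξ ≤ -(1/(k:ℝ)) → ∀ η, η ≤ -(1/(k:ℝ)) →
      |fk k ξ - fk k η| ≤ c * |ξ - η| :=
    glue_aux (fk k) c (-(k:ℝ)) (fun x => x ≤ -(1/(k:ℝ))) (by linarith)
      (fun ξ _ hξ η _ hη => lip1 ξ hξ η hη)
      (fun ξ hξp hξ η hηp hη => lip2 ξ hξ hξp η hη hηp)
  have L2 : ∀ ξ, ξ ≤ 0 → ∀ η, η ≤ 0 →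
      |fk k ξ - fk k η| ≤ c * |ξ - η| :=
    glue_aux (fk k) c (-(1/(k:ℝ))) (fun x => x ≤ 0) (by linarith)
      (fun ξ _ hξ η _ hη => L1 ξ hξ η hη)
      (fun ξ hξp hξ η hηp hη => lip3 ξ hξ hξp η hη hηp)
  have L3 : ∀ ξ, ξ ≤ 1/(k:ℝ) → ∀ η, η ≤ 1/(k:ℝ) →
      |fk k ξ - fk k η| ≤ c * |ξ - η| :=
    glue_aux (fk k) c 0 (fun x => x ≤ 1/(k:ℝ)) (by linarith)
      (fun ξ _ hξ η _ hη => L2 ξ hξ η hη)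
      (fun ξ hξp hξ η hηp hη => lip4 ξ hξ hξp η hη hηp)
  have L4 : ∀ ξ, ξ ≤ (k:ℝ) → ∀ η, η ≤ (k:ℝ) →
      |fk k ξ - fk k η| ≤ c * |ξ - η| :=
    glue_aux (fk k) c (1/(k:ℝ)) (fun x => x ≤ (k:ℝ)) hkk
      (fun ξ _ hξ η _ hη => L3 ξ hξ η hη)
      (fun ξ hξp hξ η hηp hη => lip5 ξ hξ hξp η hη hηp)
  have L5 : ∀ ξ, True → ∀ η, True →
      |fk k ξ - fk k η| ≤ c * |ξ - η| :=
    glue_aux (fk k) c (k:ℝ) (fun _ => True) trivial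
      (fun ξ _ hξ η _ hη => L4 ξ hξ η hη)
      (fun ξ _ hξ η _ hη => lip6 ξ hξ η hη)
  exact ⟨c, hc, fun ξ η => L5 ξ trivial η trivial⟩
end

section
/- The sequence of approximating functions f_k converges to f uniformly on every bounded subset of ℝ: for every bounded set B ⊂ ℝ and every ε > 0 there exists K such that for all k ≥ K and all s ∈ B, |f_k(s) − f(s)| ≤ ε. -/
open MeasureTheory intervalIntegral Real

lemma stmt_2_int_est (f : ℝ → ℝ) (hf : Continuous f) (a b c C : ℝ)
    (hC : ∀ x ∈ Set.uIoc a b, |f x - c| ≤ C) :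
    |(∫ t in a..b, f t) - (b - a) * c| ≤ C * |b - a| := by
  have h1 : (∫ t in a..b, f t) - (b - a) * c = ∫ t in a..b, (f t - c) := by
    rw [intervalIntegral.integral_sub (hf.intervalIntegrable a b) intervalIntegrable_const]
    simp [intervalIntegral.integral_const, smul_eq_mul]
  rw [h1, ← Real.norm_eq_abs]
  exact intervalIntegral.norm_integral_le_of_norm_le_const
    (fun x hx => by rw [Real.norm_eq_abs]; exact hC x hx)

set_option maxHeartbeats 1000000 in
theorem stmt_2
    (f : ℝ → ℝ) (hf : Continuous f) (hsign : ∀ s : ℝ, s * f s ≥ 0)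
    (G : ℝ → ℝ) (hG : ∀ s : ℝ, G s = ∫ t in (0:ℝ)..s, f t)
    (fk : ℕ → ℝ → ℝ)
    (h1 : ∀ (k : ℕ), 0 < k → ∀ s : ℝ, s ≤ -(k:ℝ) →
      fk k s = -(k:ℝ) * (G (-(k:ℝ) - 1/(k:ℝ)) - G (-(k:ℝ))))
    (h2 : ∀ (k : ℕ), 0 < k → ∀ s : ℝ, -(k:ℝ) ≤ s → s ≤ -(1/(k:ℝ)) →
      fk k s = -(k:ℝ) * (G (s - 1/(k:ℝ)) - G s))
    (h3 : ∀ (k : ℕ), 0 < k → ∀ s : ℝ, -(1/(k:ℝ)) ≤ s → s ≤ 0 →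
      fk k s = (k:ℝ)^2 * s * (G (-(2/(k:ℝ))) - G (-(1/(k:ℝ)))))
    (h4 : ∀ (k : ℕ), 0 < k → ∀ s : ℝ, 0 ≤ s → s ≤ 1/(k:ℝ) →
      fk k s = (k:ℝ)^2 * s * (G (2/(k:ℝ)) - G (1/(k:ℝ))))
    (h5 : ∀ (k : ℕ), 0 < k → ∀ s : ℝ, 1/(k:ℝ) ≤ s → s ≤ (k:ℝ) →
      fk k s = (k:ℝ) * (G (s + 1/(k:ℝ)) - G s))
    (h6 : ∀ (k : ℕ), 0 < k → ∀ s : ℝ, (k:ℝ) ≤ s →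
      fk k s = (k:ℝ) * (G ((k:ℝ) + 1/(k:ℝ)) - G (k:ℝ)))
    :
    ∀ B : Set ℝ, Bornology.IsBounded B → ∀ ε : ℝ, 0 < ε →
      ∃ K : ℕ, ∀ k : ℕ, K ≤ k → ∀ s ∈ B, |fk k s - f s| ≤ ε := by
  have hf0 : f 0 = 0 := by
    have hpos : ∀ s : ℝ, 0 < s → 0 ≤ f s := by
      intro s hs; by_contra h; push_neg at h; have := hsign s; nlinarith
    have hneg : ∀ s : ℝ, s < 0 → f s ≤ 0 := by
      intro s hs; by_contra h; push_neg at h; have := hsign s; nlinarith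
    have ha : 0 ≤ f 0 := by
      have ht : Filter.Tendsto f (nhdsWithin 0 (Set.Ioi 0)) (nhds (f 0)) :=
        (hf.tendsto 0).mono_left nhdsWithin_le_nhds
      exact ge_of_tendsto ht (Filter.eventually_of_mem self_mem_nhdsWithin
        fun x hx => hpos x hx)
    have hb : f 0 ≤ 0 := by
      have ht : Filter.Tendsto f (nhdsWithin 0 (Set.Iio 0)) (nhds (f 0)) :=
        (hf.tendsto 0).mono_left nhdsWithin_le_nhds
      exact le_of_tendsto ht (Filter.eventually_of_mem self_mem_nhdsWithin
        fun x hx => hneg x hx)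
    linarith
  have hGdiff : ∀ a b : ℝ, G b - G a = ∫ t in a..b, f t := by
    intro a b
    rw [hG, hG, ← intervalIntegral.integral_add_adjacent_intervals
      (hf.intervalIntegrable 0 a) (hf.intervalIntegrable a b)]
    ring
  intro B hB ε hε
  obtain ⟨r, hr⟩ := hB.subset_closedBall 0
  set M : ℝ := max r 0 with hMdef
  have hM0 : 0 ≤ M := le_max_right _ _
  have hMB : ∀ s ∈ B, |s| ≤ M := by
    intro s hs
    have := hr hs
    rw [Metric.mem_closedBall, Real.dist_eq, sub_zero] at this
    exact this.trans (le_max_left _ _)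
  have hUC : UniformContinuousOn f (Set.Icc (-(M+2)) (M+2)) :=
    (isCompact_Icc).uniformContinuousOn_of_continuous hf.continuousOn
  rw [Metric.uniformContinuousOn_iff] at hUC
  obtain ⟨δ, hδ, hδ'⟩ := hUC (ε/2) (by linarith)
  obtain ⟨K, hK⟩ := exists_nat_gt (max M (2/δ))
  refine ⟨K, fun k hk s hs => ?_⟩
  have hMk : M < (k:ℝ) := lt_of_le_of_lt (le_max_left _ _) (hK.trans_le (by exact_mod_cast hk))
  have h2δk : 2/δ < (k:ℝ) := lt_of_le_of_lt (le_max_right _ _) (hK.trans_le (by exact_mod_cast hk))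
  have hkpos : (0:ℝ) < k := lt_of_le_of_lt hM0 hMk
  have hk0 : 0 < k := by exact_mod_cast hkpos
  have h2k : 2/(k:ℝ) < δ := by
    rw [div_lt_iff₀ hδ] at h2δk
    rw [div_lt_iff₀ hkpos]
    nlinarith
  have h1k : 0 < 1/(k:ℝ) := by positivity
  have h2kpos : 0 < 2/(k:ℝ) := by positivity
  have h12 : 1/(k:ℝ) + 1/(k:ℝ) = 2/(k:ℝ) := by ring
  have h1k1 : 1/(k:ℝ) ≤ 1 := by
    rw [div_le_one hkpos]
    exact_mod_cast hk0
  have h2k2 : 2/(k:ℝ) ≤ 2 := by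
    rw [div_le_iff₀ hkpos]
    nlinarith [(show (1:ℝ) ≤ (k:ℝ) by exact_mod_cast hk0)]
  have hsM := hMB s hs
  have hsabs := abs_le.mp hsM
  -- near-zero bound: for |x| ≤ 2/k, |f x| ≤ ε/2
  have hnear : ∀ x : ℝ, |x| ≤ 2/(k:ℝ) → |f x| ≤ ε/2 := by
    intro x hx
    have hxabs := abs_le.mp hx
    have hx1 : x ∈ Set.Icc (-(M+2)) (M+2) := by constructor <;> nlinarith
    have h01 : (0:ℝ) ∈ Set.Icc (-(M+2)) (M+2) := by constructor <;> nlinarith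
    have := hδ' x hx1 0 h01 (by rw [Real.dist_eq, sub_zero]; exact lt_of_le_of_lt hx h2k)
    rw [Real.dist_eq, hf0, sub_zero] at this
    linarith
  rcases le_or_gt (1/(k:ℝ)) s with hcase | hcase
  · -- right main case
    have hsk : s ≤ (k:ℝ) := hsabs.2.trans hMk.le
    rw [h5 k hk0 s hcase hsk, hGdiff]
    set A := (∫ t in s..(s + 1/(k:ℝ)), f t) with hA
    have hest : |A - (1/(k:ℝ)) * f s| ≤ (ε/2) * (1/(k:ℝ)) := by
      have h := stmt_2_int_est f hf s (s + 1/(k:ℝ)) (f s) (ε/2) ?_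
      · have e1 : s + 1/(k:ℝ) - s = 1/(k:ℝ)  := by ring
        rw [e1, abs_of_pos h1k] at h
        exact h
      · intro x hx
        rw [Set.uIoc_of_le (by linarith)] at hx
        have hx1 : x ∈ Set.Icc (-(M+2)) (M+2) := by
          constructor <;> [nlinarith [hx.1.le]; nlinarith [hx.2]]
        have hs1 : s ∈ Set.Icc (-(M+2)) (M+2) := by constructor <;> nlinarith
        have hd : dist x s < δ := by
          rw [Real.dist_eq, abs_lt]
          constructor <;> [nlinarith [hx.1]; nlinarith [hx.2]]
        have := hδ' x hx1 s hs1 hd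
        rw [Real.dist_eq] at this
        linarith
    have hrw : (k:ℝ) * A - f s = (k:ℝ) * (A - (1/(k:ℝ)) * f s) := by
      field_simp
      try ring
    rw [hrw, abs_mul, abs_of_pos hkpos]
    have hle := mul_le_mul_of_nonneg_left hest hkpos.le
    have hkinv : (k:ℝ) * ((ε/2) * (1/(k:ℝ))) = ε/2 := by field_simp; try ring
    rw [hkinv] at hle
    linarith
  rcases le_or_gt s (-(1/(k:ℝ))) with hcase' | hcase'
  · -- left main case
    have hsk : -(k:ℝ) ≤ s := by nlinarith [hsabs.1]
    rw [h2 k hk0 s hsk hcase']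
    have hGrw : -(k:ℝ) * (G (s - 1/(k:ℝ)) - G s) = (k:ℝ) * (G s - G (s - 1/(k:ℝ))) := by ring
    rw [hGrw, hGdiff]
    set A := (∫ t in (s - 1/(k:ℝ))..s, f t) with hA
    have hest : |A - (1/(k:ℝ)) * f s| ≤ (ε/2) * (1/(k:ℝ)) := by
      have h := stmt_2_int_est f hf (s - 1/(k:ℝ)) s (f s) (ε/2) ?_
      · have e1 : s - (s - 1/(k:ℝ)) = 1/(k:ℝ)  := by ring
        rw [e1, abs_of_pos h1k] at h
        exact h
      · intro x hx
        rw [Set.uIoc_of_le (by linarith)] at hx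
        have hx1 : x ∈ Set.Icc (-(M+2)) (M+2) := by
          constructor <;> [nlinarith [hx.1.le]; nlinarith [hx.2]]
        have hs1 : s ∈ Set.Icc (-(M+2)) (M+2) := by constructor <;> nlinarith
        have hd : dist x s < δ := by
          rw [Real.dist_eq, abs_lt]
          constructor <;> [nlinarith [hx.1]; nlinarith [hx.2]]
        have := hδ' x hx1 s hs1 hd
        rw [Real.dist_eq] at this
        linarith
    have hrw : (k:ℝ) * A - f s = (k:ℝ) * (A - (1/(k:ℝ)) * f s) := by
      field_simp
      try ring
    rw [hrw, abs_mul, abs_of_pos hkpos]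
    have hle := mul_le_mul_of_nonneg_left hest hkpos.le
    have hkinv : (k:ℝ) * ((ε/2) * (1/(k:ℝ))) = ε/2 := by field_simp; try ring
    rw [hkinv] at hle
    linarith
  -- middle cases
  · have hfs : |f s| ≤ ε/2 := by
      apply hnear
      rw [abs_le]
      constructor <;> nlinarith
    have hmid : ∀ a b : ℝ, a ≤ b → b - a = 1/(k:ℝ) → (∀ x ∈ Set.Icc a b, |x| ≤ 2/(k:ℝ)) →
        |∫ t in a..b, f t| ≤ (ε/2) * (1/(k:ℝ)) := by
      intro a b hab hba hball
      have hest := stmt_2_int_est f hf a b 0 (ε/2) ?_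
      · rw [mul_zero, sub_zero, hba, abs_of_pos h1k] at hest
        exact hest
      · intro x hx
        rw [Set.uIoc_of_le hab] at hx
        rw [sub_zero]
        exact hnear x (hball x ⟨hx.1.le, hx.2⟩)
    rcases le_or_gt 0 s with hs0 | hs0
    · -- s ∈ [0, 1/k)
      rw [h4 k hk0 s hs0 hcase.le, hGdiff]
      set A := (∫ t in (1/(k:ℝ))..(2/(k:ℝ)), f t) with hA
      have hint : |A| ≤ (ε/2) * (1/(k:ℝ)) := by
        rw [hA]
        apply hmid _ _ (by linarith) (by ring)
        intro x hx
        rw [abs_le]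
        exact ⟨by nlinarith [hx.1], hx.2⟩
      have hbound : |(k:ℝ)^2 * s * A| ≤ ε/2 := by
        rw [abs_mul, abs_mul, abs_of_nonneg (by positivity : (0:ℝ) ≤ (k:ℝ)^2),
          abs_of_nonneg hs0]
        have h1 : (k:ℝ)^2 * s * |A| ≤ (k:ℝ)^2 * (1/(k:ℝ)) * ((ε/2) * (1/(k:ℝ))) := by
          apply mul_le_mul (by nlinarith [hcase.le]) hint (abs_nonneg _) (by positivity)
        have h2' : (k:ℝ)^2 * (1/(k:ℝ)) * ((ε/2) * (1/(k:ℝ))) = ε/2 := by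
          field_simp
        linarith
      calc |(k:ℝ)^2 * s * A - f s| ≤ |(k:ℝ)^2 * s * A| + |f s| := abs_sub _ _
        _ ≤ ε/2 + ε/2 := add_le_add hbound hfs
        _ = ε := by ring
    · -- s ∈ (-(1/k), 0)
      rw [h3 k hk0 s (by linarith) hs0.le, hGdiff]
      set A := (∫ t in (-(1/(k:ℝ)))..(-(2/(k:ℝ))), f t) with hA
      have hint : |A| ≤ (ε/2) * (1/(k:ℝ)) := by
        rw [hA, intervalIntegral.integral_symm, abs_neg]
        apply hmid _ _ (by linarith) (by ring)
        intro x hx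
        rw [abs_le]
        exact ⟨hx.1, by nlinarith [hx.2]⟩
      have hbound : |(k:ℝ)^2 * s * A| ≤ ε/2 := by
        rw [abs_mul, abs_mul, abs_of_nonneg (by positivity : (0:ℝ) ≤ (k:ℝ)^2),
          abs_of_neg hs0]
        have h1 : (k:ℝ)^2 * (-s) * |A| ≤ (k:ℝ)^2 * (1/(k:ℝ)) * ((ε/2) * (1/(k:ℝ))) := by
          apply mul_le_mul (by nlinarith) hint (abs_nonneg _) (by positivity)
        have h2' : (k:ℝ)^2 * (1/(k:ℝ)) * ((ε/2) * (1/(k:ℝ))) = ε/2 := by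
          field_simp
        linarith
      calc |(k:ℝ)^2 * s * A - f s| ≤ |(k:ℝ)^2 * s * A| + |f s| := abs_sub _ _
        _ ≤ ε/2 + ε/2 := add_le_add hbound hfs
        _ = ε := by ring
end

section
/- For every positive integer k and every real number s with |s| ≥ 1/k, the approximating function satisfies 0 ≤ s·f_k(s) ≤ a₃·2^{r₃}·|s|^{r₃}·exp(2^{N/(N-1)}·α·|s|^{N/(N-1)}). In particular, the constant C₁ = a₃·2^{r₃} is independent of k. -/
open MeasureTheory intervalIntegral Real

theorem stmt_3
    (N : ℕ) (hN : 2 ≤ N) (a₃ α r₃ : ℝ) (ha₃ : 0 < a₃) (hα : 0 < α)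
    (hr₃ : (N:ℝ) - 1 < r₃)
    (f : ℝ → ℝ) (hf : Continuous f)
    (hgrowth : ∀ s : ℝ, 0 ≤ s * f s ∧
      s * f s ≤ a₃ * |s| ^ r₃ * Real.exp (α * |s| ^ ((N:ℝ)/((N:ℝ)-1))))
    (G : ℝ → ℝ) (hG : ∀ s : ℝ, G s = ∫ t in (0:ℝ)..s, f t)
    (fk : ℕ → ℝ → ℝ)
    (h1 : ∀ (k : ℕ), 0 < k → ∀ s : ℝ, s ≤ -(k:ℝ) →
      fk k s = -(k:ℝ) * (G (-(k:ℝ) - 1/(k:ℝ)) - G (-(k:ℝ))))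
    (h2 : ∀ (k : ℕ), 0 < k → ∀ s : ℝ, -(k:ℝ) ≤ s → s ≤ -(1/(k:ℝ)) →
      fk k s = -(k:ℝ) * (G (s - 1/(k:ℝ)) - G s))
    (h3 : ∀ (k : ℕ), 0 < k → ∀ s : ℝ, -(1/(k:ℝ)) ≤ s → s ≤ 0 →
      fk k s = (k:ℝ)^2 * s * (G (-(2/(k:ℝ))) - G (-(1/(k:ℝ)))))
    (h4 : ∀ (k : ℕ), 0 < k → ∀ s : ℝ, 0 ≤ s → s ≤ 1/(k:ℝ) →
      fk k s = (k:ℝ)^2 * s * (G (2/(k:ℝ)) - G (1/(k:ℝ))))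
    (h5 : ∀ (k : ℕ), 0 < k → ∀ s : ℝ, 1/(k:ℝ) ≤ s → s ≤ (k:ℝ) →
      fk k s = (k:ℝ) * (G (s + 1/(k:ℝ)) - G s))
    (h6 : ∀ (k : ℕ), 0 < k → ∀ s : ℝ, (k:ℝ) ≤ s →
      fk k s = (k:ℝ) * (G ((k:ℝ) + 1/(k:ℝ)) - G (k:ℝ)))
    :
    ∀ (k : ℕ), 0 < k → ∀ s : ℝ, 1/(k:ℝ) ≤ |s| →
      0 ≤ s * fk k s ∧
      s * fk k s ≤ a₃ * (2:ℝ) ^ r₃ * |s| ^ r₃ *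
        Real.exp ((2:ℝ) ^ ((N:ℝ)/((N:ℝ)-1)) * α * |s| ^ ((N:ℝ)/((N:ℝ)-1))) := by
  intro k hk s hs
  have hN2 : (2:ℝ) ≤ (N:ℝ) := by exact_mod_cast hN
  set p : ℝ := (N:ℝ)/((N:ℝ)-1) with hp
  have hr1 : (1:ℝ) ≤ r₃ := by linarith
  have hppos : 0 < p := div_pos (by linarith) (by linarith)
  have hkpos : (0:ℝ) < k := by exact_mod_cast hk
  have hk1 : (1:ℝ) ≤ (k:ℝ) := by exact_mod_cast hk
  have hik : (0:ℝ) < 1/(k:ℝ) := by positivity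
  have hik1 : 1/(k:ℝ) ≤ (k:ℝ) := by
    rw [div_le_iff₀ hkpos]; nlinarith
  have hspos : 0 < |s| := lt_of_lt_of_le hik hs
  set C : ℝ := a₃ * (2:ℝ) ^ r₃ * |s| ^ r₃ * Real.exp ((2:ℝ) ^ p * α * |s| ^ p) with hCdef
  have hGdiff : ∀ a b : ℝ, G b - G a = ∫ t in a..b, f t := by
    intro a b
    rw [hG, hG, intervalIntegral.integral_interval_sub_left
      (hf.intervalIntegrable _ _) (hf.intervalIntegrable _ _)]
  have key : ∀ t : ℝ, t ≠ 0 → 0 ≤ s/t → |t| ≤ 2*|s| → 0 ≤ s * f t ∧ s * f t ≤ C := by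
    intro t ht hst hts
    have htpos : 0 < |t| := abs_pos.mpr ht
    obtain ⟨hg1, hg2⟩ := hgrowth t
    have heq : s * f t = (s/t) * (t * f t) := by field_simp
    constructor
    · rw [heq]; exact mul_nonneg hst hg1
    · rw [heq]
      have hst' : s/t ≤ |s|/|t| := by rw [← abs_div]; exact le_abs_self _
      have hb1 : s/t * (t * f t) ≤ |s|/|t| * (a₃ * |t| ^ r₃ * Real.exp (α * |t| ^ p)) :=
        mul_le_mul hst' hg2 hg1 (by positivity)
      have htr : |t| ^ r₃ = |t| ^ (r₃ - 1) * |t| := by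
        rw [← Real.rpow_add_one (ne_of_gt htpos)]; ring_nf
      have hb2 : |s|/|t| * (a₃ * |t| ^ r₃ * Real.exp (α * |t| ^ p))
          = a₃ * (|s| * |t| ^ (r₃ - 1)) * Real.exp (α * |t| ^ p) := by
        rw [htr]; field_simp
      have htr1 : |t| ^ (r₃ - 1) ≤ (2*|s|) ^ (r₃ - 1) :=
        Real.rpow_le_rpow (abs_nonneg t) hts (by linarith)
      have hexp : Real.exp (α * |t| ^ p) ≤ Real.exp ((2:ℝ) ^ p * α * |s| ^ p) := by
        apply Real.exp_le_exp.mpr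
        have h1 : |t| ^ p ≤ (2*|s|) ^ p :=
          Real.rpow_le_rpow (abs_nonneg t) hts (le_of_lt hppos)
        have h2 : (2*|s|) ^ p = 2 ^ p * |s| ^ p :=
          Real.mul_rpow (by norm_num) (abs_nonneg s)
        nlinarith [Real.rpow_nonneg (abs_nonneg t) p, h1, h2,
          mul_le_mul_of_nonneg_left (h2 ▸ h1) (le_of_lt hα)]
      have hmid : a₃ * (|s| * |t| ^ (r₃ - 1)) ≤ a₃ * ((2:ℝ) ^ r₃ * |s| ^ r₃) := by
        apply mul_le_mul_of_nonneg_left _ (le_of_lt ha₃)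
        have h2s : (2*|s|) ^ (r₃ - 1) = 2 ^ (r₃-1) * |s| ^ (r₃-1) :=
          Real.mul_rpow (by norm_num) (abs_nonneg s)
        have hss : |s| * |s| ^ (r₃ - 1) = |s| ^ r₃ := by
          rw [← Real.rpow_one_add' (abs_nonneg s) (by linarith)]; ring_nf
        have h2le : (2:ℝ) ^ (r₃-1) ≤ (2:ℝ) ^ r₃ :=
          Real.rpow_le_rpow_of_exponent_le (by norm_num) (by linarith)
        calc |s| * |t| ^ (r₃ - 1) ≤ |s| * (2 ^ (r₃-1) * |s| ^ (r₃-1)) := by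
              apply mul_le_mul_of_nonneg_left _ (abs_nonneg s)
              rw [← h2s]; exact htr1
          _ = 2 ^ (r₃-1) * |s| ^ r₃ := by rw [← hss]; ring
          _ ≤ 2 ^ r₃ * |s| ^ r₃ :=
              mul_le_mul_of_nonneg_right h2le (Real.rpow_nonneg (abs_nonneg s) r₃)
      calc s/t * (t * f t)
          ≤ |s|/|t| * (a₃ * |t| ^ r₃ * Real.exp (α * |t| ^ p)) := hb1
        _ = a₃ * (|s| * |t| ^ (r₃ - 1)) * Real.exp (α * |t| ^ p) := hb2
        _ ≤ a₃ * ((2:ℝ) ^ r₃ * |s| ^ r₃) * Real.exp ((2:ℝ) ^ p * α * |s| ^ p) := by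
            apply mul_le_mul hmid hexp (le_of_lt (Real.exp_pos _))
            positivity
        _ = C := by rw [hCdef]; ring
  have step : ∀ a b : ℝ, b = a + 1/(k:ℝ) →
      (∀ t ∈ Set.Icc a b, t ≠ 0 ∧ 0 ≤ s/t ∧ |t| ≤ 2*|s|) →
      0 ≤ s * ((k:ℝ) * (G b - G a)) ∧ s * ((k:ℝ) * (G b - G a)) ≤ C := by
    intro a b hb hmem
    have hab : a ≤ b := by rw [hb]; linarith
    rw [hGdiff]
    have hInt : IntervalIntegrable (fun t => s * f t) volume a b :=
      (continuous_const.mul hf).intervalIntegrable a b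
    have hsmul : s * ((k:ℝ) * ∫ t in a..b, f t) = (k:ℝ) * ∫ t in a..b, s * f t := by
      rw [intervalIntegral.integral_const_mul]; ring
    rw [hsmul]
    constructor
    · apply mul_nonneg (le_of_lt hkpos)
      apply intervalIntegral.integral_nonneg hab
      intro u hu
      exact (key u (hmem u hu).1 (hmem u hu).2.1 (hmem u hu).2.2).1
    · have hle : (∫ t in a..b, s * f t) ≤ ∫ _t in a..b, C := by
        apply intervalIntegral.integral_mono_on hab hInt (intervalIntegrable_const)
        intro u hu
        exact (key u (hmem u hu).1 (hmem u hu).2.1 (hmem u hu).2.2).2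
      have hconst : (∫ _t in a..b, C) = (b-a) * C := by
        rw [intervalIntegral.integral_const, smul_eq_mul]
      calc (k:ℝ) * ∫ t in a..b, s * f t ≤ (k:ℝ) * ((b-a) * C) := by
            rw [← hconst]; exact mul_le_mul_of_nonneg_left hle (le_of_lt hkpos)
        _ = C := by rw [hb]; field_simp; ring
  rcases le_or_gt 0 s with hsnn | hsneg
  · have hs' : 1/(k:ℝ) ≤ s := by rwa [abs_of_nonneg hsnn] at hs
    have hs0 : 0 < s := lt_of_lt_of_le hik hs'
    have hsabs : |s| = s := abs_of_nonneg hsnn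
    rcases le_or_gt s (k:ℝ) with hsk | hks
    · rw [h5 k hk s hs' hsk]
      apply step s (s + 1/(k:ℝ)) rfl
      intro t ht
      obtain ⟨ht1, ht2⟩ := ht
      have ht0 : 0 < t := lt_of_lt_of_le hs0 ht1
      refine ⟨ne_of_gt ht0, le_of_lt (div_pos hs0 ht0), ?_⟩
      rw [abs_of_pos ht0, hsabs]
      linarith
    · rw [h6 k hk s (le_of_lt hks)]
      apply step (k:ℝ) ((k:ℝ) + 1/(k:ℝ)) rfl
      intro t ht
      obtain ⟨ht1, ht2⟩ := ht
      have ht0 : 0 < t := lt_of_lt_of_le hkpos ht1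
      refine ⟨ne_of_gt ht0, le_of_lt (div_pos hs0 ht0), ?_⟩
      rw [abs_of_pos ht0, hsabs]
      linarith
  · have hs' : s ≤ -(1/(k:ℝ)) := by
      rw [abs_of_neg hsneg] at hs; linarith
    have hsabs : |s| = -s := abs_of_neg hsneg
    rcases le_or_gt (-(k:ℝ)) s with hks | hsk
    · have heq : fk k s = -(k:ℝ) * (G (s - 1/(k:ℝ)) - G s) := h2 k hk s hks hs'
      have heq2 : s * fk k s = s * ((k:ℝ) * (G s - G (s - 1/(k:ℝ)))) := by
        rw [heq]; ring
      rw [heq2]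
      apply step (s - 1/(k:ℝ)) s (by ring)
      intro t ht
      obtain ⟨ht1, ht2⟩ := ht
      have ht0 : t < 0 := lt_of_le_of_lt ht2 hsneg
      refine ⟨ne_of_lt ht0, le_of_lt (div_pos_of_neg_of_neg hsneg ht0), ?_⟩
      rw [abs_of_neg ht0, hsabs]
      rw [abs_of_neg hsneg] at hs
      linarith
    · have heq : fk k s = -(k:ℝ) * (G (-(k:ℝ) - 1/(k:ℝ)) - G (-(k:ℝ))) :=
        h1 k hk s (le_of_lt hsk)
      have heq2 : s * fk k s = s * ((k:ℝ) * (G (-(k:ℝ)) - G (-(k:ℝ) - 1/(k:ℝ)))) := by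
        rw [heq]; ring
      rw [heq2]
      apply step (-(k:ℝ) - 1/(k:ℝ)) (-(k:ℝ)) (by ring)
      intro t ht
      obtain ⟨ht1, ht2⟩ := ht
      have ht0 : t < 0 := lt_of_le_of_lt ht2 (by linarith)
      refine ⟨ne_of_lt ht0, le_of_lt (div_pos_of_neg_of_neg hsneg ht0), ?_⟩
      rw [abs_of_neg ht0, hsabs]
      linarith
end

section
/- For every positive integer k and every real number s with s ≤ −k, there exists η ∈ (−k − 1/k, −k) such that f_k(s) = f(η), and one has the estimate s·f_k(s) ≤ a₃·2^{r₃−1}·|s|^{r₃}·exp(2^{N/(N-1)}·α·|s|^{N/(N-1)}). -/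
open MeasureTheory intervalIntegral Real

theorem stmt_7
    (N : ℕ) (hN : 2 ≤ N) (a₃ α r₃ : ℝ) (ha₃ : 0 < a₃) (hα : 0 < α)
    (hr₃ : (N:ℝ) - 1 < r₃)
    (f : ℝ → ℝ) (hf : Continuous f)
    (hgrowth : ∀ s : ℝ, 0 ≤ s * f s ∧
      s * f s ≤ a₃ * |s| ^ r₃ * Real.exp (α * |s| ^ ((N:ℝ)/((N:ℝ)-1))))
    (G : ℝ → ℝ) (hG : ∀ s : ℝ, G s = ∫ t in (0:ℝ)..s, f t)
    (fk : ℕ → ℝ → ℝ)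
    (h1 : ∀ (k : ℕ), 0 < k → ∀ s : ℝ, s ≤ -(k:ℝ) →
      fk k s = -(k:ℝ) * (G (-(k:ℝ) - 1/(k:ℝ)) - G (-(k:ℝ))))
    (k : ℕ) (hk : 0 < k) (s : ℝ) (hs : s ≤ -(k:ℝ)) :
    ∃ η ∈ Set.Ioo (-(k:ℝ) - 1/(k:ℝ)) (-(k:ℝ)), fk k s = f η ∧
      s * fk k s ≤ a₃ * (2:ℝ) ^ (r₃ - 1) * |s| ^ r₃ *
        Real.exp ((2:ℝ) ^ ((N:ℝ)/((N:ℝ)-1)) * α * |s| ^ ((N:ℝ)/((N:ℝ)-1))) := by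
  have hk1 : (1:ℝ) ≤ (k:ℝ) := by exact_mod_cast hk
  have hkpos : (0:ℝ) < (k:ℝ) := by linarith
  set a : ℝ := -(k:ℝ) - 1/(k:ℝ) with ha
  set b : ℝ := -(k:ℝ) with hb
  have hab : a < b := by
    have : 0 < 1/(k:ℝ) := by positivity
    simp only [ha, hb]; linarith
  have hGfun : G = fun u => ∫ t in (0:ℝ)..u, f t := funext hG
  have hderiv : ∀ x : ℝ, HasDerivAt G (f x) x := by
    intro x
    rw [hGfun]
    exact (hf.integral_hasStrictDerivAt 0 x).hasDerivAt
  have hcont : ContinuousOn G (Set.Icc a b) :=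
    (continuous_iff_continuousAt.2 fun x => (hderiv x).continuousAt).continuousOn
  obtain ⟨η, hη, hslope⟩ :=
    exists_hasDerivAt_eq_slope G f hab hcont (fun x _ => hderiv x)
  refine ⟨η, hη, ?_, ?_⟩
  · rw [h1 k hk s hs, hslope]
    have hk0 : (k:ℝ) ≠ 0 := ne_of_gt hkpos
    simp only [ha, hb]
    field_simp
    ring
  · have hfk : fk k s = f η := by
      rw [h1 k hk s hs, hslope]
      have hk0 : (k:ℝ) ≠ 0 := ne_of_gt hkpos
      simp only [ha, hb]
      field_simp
      ring
    rw [hfk]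
    set p : ℝ := (N:ℝ)/((N:ℝ)-1) with hp
    have hN2 : (2:ℝ) ≤ (N:ℝ) := by exact_mod_cast hN
    have hppos : 0 < p := by
      apply div_pos <;> linarith
    have hr1 : 0 ≤ r₃ - 1 := by linarith
    have hη0 : η < 0 := lt_of_lt_of_le hη.2 (by simp only [hb]; linarith)
    have hs0 : s < 0 := lt_of_le_of_lt hs (by linarith)
    have hsabs : |s| = -s := abs_of_neg hs0
    have hηabs : |η| = -η := abs_of_neg hη0
    have hηpos : 0 < |η| := abs_pos.2 (ne_of_lt hη0)
    have hspos : 0 < |s| := abs_pos.2 (ne_of_lt hs0)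
    have hsge : (k:ℝ) ≤ |s| := by rw [hsabs]; linarith
    have hη2s : |η| ≤ 2 * |s| := by
      have h1' : a < η := hη.1
      have : -η < (k:ℝ) + 1/(k:ℝ) := by simp only [ha] at h1'; linarith
      have hinv : 1/(k:ℝ) ≤ (k:ℝ) := by
        rw [div_le_iff₀ hkpos]; nlinarith
      rw [hηabs]; linarith
    have hg := hgrowth η
    have hfη : f η ≤ 0 := by
      by_contra h
      push_neg at h
      nlinarith [hg.1]
    -- key identity: s * f η = (|s|/|η|) * (η * f η)
    have hkey : s * f η = (|s|/|η|) * (η * f η) := by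
      rw [hsabs, hηabs]
      field_simp
      rw [eq_div_iff (ne_of_lt hη0)]
    have hratio : 0 ≤ |s| / |η| := by positivity
    have step1 : s * f η ≤ (|s|/|η|) * (a₃ * |η| ^ r₃ * Real.exp (α * |η| ^ p)) := by
      rw [hkey]
      exact mul_le_mul_of_nonneg_left hg.2 hratio
    have hrpow : |η| ^ r₃ / |η| = |η| ^ (r₃ - 1) := by
      rw [Real.rpow_sub hηpos, Real.rpow_one]
    have step2 : (|s|/|η|) * (a₃ * |η| ^ r₃ * Real.exp (α * |η| ^ p))
        = a₃ * |s| * |η| ^ (r₃ - 1) * Real.exp (α * |η| ^ p) := by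
      rw [← hrpow]
      field_simp
    have hmono1 : |η| ^ (r₃ - 1) ≤ (2 * |s|) ^ (r₃ - 1) :=
      Real.rpow_le_rpow (le_of_lt hηpos) hη2s hr1
    have hmono2 : |η| ^ p ≤ (2 * |s|) ^ p :=
      Real.rpow_le_rpow (le_of_lt hηpos) hη2s (le_of_lt hppos)
    have h2s1 : (2 * |s|) ^ (r₃ - 1) = 2 ^ (r₃ - 1) * |s| ^ (r₃ - 1) :=
      Real.mul_rpow (by norm_num) (le_of_lt hspos)
    have h2s2 : (2 * |s|) ^ p = 2 ^ p * |s| ^ p :=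
      Real.mul_rpow (by norm_num) (le_of_lt hspos)
    have hsr : |s| * |s| ^ (r₃ - 1) = |s| ^ r₃ := by
      nth_rewrite 1 [← Real.rpow_one |s|]
      rw [← Real.rpow_add hspos]
      norm_num
    calc s * f η ≤ (|s|/|η|) * (a₃ * |η| ^ r₃ * Real.exp (α * |η| ^ p)) := step1
      _ = a₃ * |s| * |η| ^ (r₃ - 1) * Real.exp (α * |η| ^ p) := step2
      _ ≤ a₃ * |s| * ((2*|s|) ^ (r₃ - 1)) * Real.exp (α * ((2*|s|) ^ p)) := by
          apply mul_le_mul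
          · apply mul_le_mul_of_nonneg_left hmono1; positivity
          · exact Real.exp_le_exp.2 (mul_le_mul_of_nonneg_left hmono2 (le_of_lt hα))
          · positivity
          · positivity
      _ = a₃ * (2:ℝ) ^ (r₃ - 1) * |s| ^ r₃ * Real.exp ((2:ℝ) ^ p * α * |s| ^ p) := by
          rw [h2s1, h2s2, ← hsr]
          ring
end

section
/- For every positive integer k and every real number s with s ≥ k, there exists η ∈ (k, k + 1/k) such that f_k(s) = f(η), and one has the estimate s·f_k(s) ≤ a₃·2^{r₃−1}·|s|^{r₃}·exp(2^{N/(N-1)}·α·|s|^{N/(N-1)}). -/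
open MeasureTheory intervalIntegral Real

theorem stmt_8
    (N : ℕ) (hN : 2 ≤ N) (a₃ α r₃ : ℝ) (ha₃ : 0 < a₃) (hα : 0 < α)
    (hr₃ : (N:ℝ) - 1 < r₃)
    (f : ℝ → ℝ) (hf : Continuous f)
    (hgrowth : ∀ s : ℝ, 0 ≤ s * f s ∧
      s * f s ≤ a₃ * |s| ^ r₃ * Real.exp (α * |s| ^ ((N:ℝ)/((N:ℝ)-1))))
    (G : ℝ → ℝ) (hG : ∀ s : ℝ, G s = ∫ t in (0:ℝ)..s, f t)
    (fk : ℕ → ℝ → ℝ)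
    (h6 : ∀ (k : ℕ), 0 < k → ∀ s : ℝ, (k:ℝ) ≤ s →
      fk k s = (k:ℝ) * (G ((k:ℝ) + 1/(k:ℝ)) - G (k:ℝ)))
    (k : ℕ) (hk : 0 < k) (s : ℝ) (hs : (k:ℝ) ≤ s) :
    ∃ η ∈ Set.Ioo (k:ℝ) ((k:ℝ) + 1/(k:ℝ)), fk k s = f η ∧
      s * fk k s ≤ a₃ * (2:ℝ) ^ (r₃ - 1) * |s| ^ r₃ *
        Real.exp ((2:ℝ) ^ ((N:ℝ)/((N:ℝ)-1)) * α * |s| ^ ((N:ℝ)/((N:ℝ)-1))) := by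
  have hk1 : (1:ℝ) ≤ (k:ℝ) := by exact_mod_cast hk
  have hkpos : (0:ℝ) < (k:ℝ) := by linarith
  have hik : 0 < 1/(k:ℝ) := by positivity
  have hab : (k:ℝ) < (k:ℝ) + 1/(k:ℝ) := by linarith
  -- derivative of G
  have hGderiv : ∀ x : ℝ, HasDerivAt G (f x) x := by
    intro x
    have : HasDerivAt (fun y => ∫ t in (0:ℝ)..y, f t) (f x) x :=
      (intervalIntegral.integral_hasStrictDerivAt_right
        (hf.intervalIntegrable 0 x) (hf.stronglyMeasurableAtFilter _ _)
        hf.continuousAt).hasDerivAt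
    have hfun : G = fun y => ∫ t in (0:ℝ)..y, f t := funext hG
    rw [hfun]; exact this
  obtain ⟨η, hη, hslope⟩ := exists_hasDerivAt_eq_slope G f hab
    (fun x _ => (hGderiv x).continuousAt.continuousWithinAt)
    (fun x _ => hGderiv x)
  have hηpos : (0:ℝ) < η := lt_trans hkpos hη.1
  have hfk : fk k s = f η := by
    rw [h6 k hk s hs, hslope]
    field_simp
    ring
  refine ⟨η, hη, hfk, ?_⟩
  -- bounds
  have hspos : (0:ℝ) < s := lt_of_lt_of_le hkpos hs
  have hη2s : η ≤ 2 * s := by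
    have h1 : 1/(k:ℝ) ≤ (k:ℝ) := by
      rw [div_le_iff₀ hkpos]; nlinarith
    have := hη.2
    nlinarith
  set p : ℝ := (N:ℝ)/((N:ℝ)-1) with hp
  have hN1 : (1:ℝ) ≤ (N:ℝ) - 1 := by
    have : (2:ℝ) ≤ (N:ℝ) := by exact_mod_cast hN
    linarith
  have hppos : 0 < p := by
    apply div_pos <;> linarith
  have hfη : 0 ≤ f η := by
    have := (hgrowth η).1
    nlinarith
  have hηb := (hgrowth η).2
  have hr1 : (0:ℝ) ≤ r₃ - 1 := by linarith
  -- s * f η = (s/η) * (η * f η) ≤ a₃ * s * η^(r₃-1) * exp(α * η^p)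
  have key : s * f η ≤ a₃ * s * η ^ (r₃ - 1) * Real.exp (α * η ^ p) := by
    have habsη : |η| = η := abs_of_pos hηpos
    rw [habsη] at hηb
    have h1 : η ^ r₃ = η * η ^ (r₃ - 1) := by
      rw [← Real.rpow_one_add' (le_of_lt hηpos)]
      · ring_nf
      · linarith
    have h2 : s * f η = (s/η) * (η * f η) := by field_simp
    rw [h2]
    have h3 : (s/η) * (η * f η) ≤ (s/η) * (a₃ * η ^ r₃ * Real.exp (α * η ^ p)) := by
      apply mul_le_mul_of_nonneg_left hηb (by positivity)
    refine h3.trans (le_of_eq ?_)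
    rw [h1]; field_simp
  have hexp : Real.exp (α * η ^ p) ≤ Real.exp ((2:ℝ) ^ p * α * |s| ^ p) := by
    apply Real.exp_le_exp.mpr
    have : η ^ p ≤ (2*s) ^ p :=
      Real.rpow_le_rpow (le_of_lt hηpos) hη2s (le_of_lt hppos)
    rw [Real.mul_rpow (by norm_num) (le_of_lt hspos)] at this
    rw [abs_of_pos hspos]
    nlinarith [Real.rpow_nonneg hspos.le p]
  have hηpow : η ^ (r₃ - 1) ≤ (2:ℝ) ^ (r₃ - 1) * s ^ (r₃ - 1) := by
    have : η ^ (r₃-1) ≤ (2*s) ^ (r₃-1) :=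
      Real.rpow_le_rpow (le_of_lt hηpos) hη2s hr1
    rwa [Real.mul_rpow (by norm_num) (le_of_lt hspos)] at this
  rw [hfk]
  calc s * f η ≤ a₃ * s * η ^ (r₃ - 1) * Real.exp (α * η ^ p) := key
    _ ≤ a₃ * s * ((2:ℝ) ^ (r₃-1) * s ^ (r₃-1)) * Real.exp ((2:ℝ) ^ p * α * |s| ^ p) := by
        apply mul_le_mul
        · apply mul_le_mul_of_nonneg_left hηpow (by positivity)
        · exact hexp
        · positivity
        · positivity
    _ = a₃ * (2:ℝ) ^ (r₃ - 1) * |s| ^ r₃ * Real.exp ((2:ℝ) ^ p * α * |s| ^ p) := by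
        rw [abs_of_pos hspos]
        have : s * s ^ (r₃ - 1) = s ^ r₃ := by
          rw [← Real.rpow_one_add' hspos.le]
          · ring_nf
          · linarith
        rw [← this]; ring
end
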